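/- If n ≥ 2, x ≥ 1, and U_n^x + U_{n+1}^x = U_{nx-1}, then U_n divides x·r. -/
import Mathlib

def U (r : ℕ) : ℕ → ℕ
  | 0 => 0
  | 1 => 1
  | n + 2 => r * U r (n + 1) + U r n

def V (r : ℕ) : ℕ → ℕ
  | 0 => 2
  | 1 => r
  | n + 2 => r * V r (n + 1) + V r n

lemma U_add (r b : ℕ) : ∀ a, U r (a + b + 1) = U r (a+1) * U r (b+1) + U r a * U r b := by
  intro a
  induction a using Nat.twoStepInduction with
  | zero => simp [U]
  | one =>
    have e : 1 + b + 1 = b + 2 := by omega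
    rw [e]
    show U r (b + 2) = U r (1+1) * U r (b+1) + U r 1 * U r b
    norm_num [U]
  | more a ih1 ih2 =>
    have e1 : a + 2 + b + 1 = (a + b + 1) + 2 := by omega
    have e2 : a + 1 + b + 1 = (a + b + 1) + 1 := by omega
    rw [e1]
    show r * U r (a + b + 1 + 1) + U r (a + b + 1) = _
    rw [← e2, ih2, ih1]
    show _ = (r * U r (a+2) + U r (a+1)) * U r (b+1) + (r * U r (a+1) + U r a) * U r b
    ring

lemma one_le_U (r : ℕ) (hr : 1 ≤ r) : ∀ n, 1 ≤ U r (n+1) := by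
  intro n
  induction n using Nat.twoStepInduction with
  | zero => simp [U]
  | one => show 1 ≤ r * U r 1 + U r 0; simp [U]; omega
  | more a ih1 ih2 =>
    show 1 ≤ r * U r (a+2) + U r (a+1)
    nlinarith

lemma U_dvd (r n : ℕ) : ∀ k, U r n ∣ U r (n * k) := by
  intro k
  induction k with
  | zero => simp [U]
  | succ k ih =>
    rcases Nat.eq_zero_or_pos n with h0 | h0
    · simp [h0, U]
    · obtain ⟨m, rfl⟩ : ∃ m, n = m + 1 := ⟨n - 1, by omega⟩
      have e : (m+1) * (k+1) = (m+1)*k + m + 1 := by ring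
      rw [e, U_add]
      exact Dvd.dvd.add (Dvd.dvd.mul_left dvd_rfl _) (ih.mul_right _)

lemma U_cop (r : ℕ) : ∀ n, Nat.Coprime (U r n) (U r (n+1)) := by
  intro n
  induction n with
  | zero => simp [U, Nat.Coprime]
  | succ n ih =>
    show Nat.Coprime (U r (n+1)) (r * U r (n+1) + U r n)
    rw [show r * U r (n+1) + U r n = U r n + U r (n+1) * r from by ring,
      Nat.coprime_add_mul_left_right]
    exact ih.symm

lemma U_mod (r m : ℕ) : ∀ k, (U r ((m+1)*(k+1) - 1) : ℤ) ≡ ((U r m : ℤ))^(k+1) [ZMOD ((U r (m+1) : ℤ))^2] := by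
  intro k
  induction k with
  | zero => simp
  | succ k ih =>
    set t := (m+1)*(k+1) with ht
    have ht1 : 1 ≤ t := Nat.one_le_iff_ne_zero.mpr (by positivity)
    have e : (m+1)*(k+2) - 1 = (t - 1) + m + 1 := by
      have : (m+1)*(k+2) = t + m + 1 := by rw [ht]; ring
      omega
    rw [e, U_add]
    have e2 : t - 1 + 1 = t := by omega
    rw [e2]
    have d1 : ((U r (m+1) : ℤ))^2 ∣ (U r t : ℤ) * (U r (m+1) : ℤ) := by
      obtain ⟨c, hc⟩ := U_dvd r (m+1) (k+1)
      exact ⟨c, by rw [ht, hc]; push_cast; ring⟩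
    calc (U r t : ℤ) * (U r (m+1) : ℤ) + (U r (t-1) : ℤ) * (U r m : ℤ)
        ≡ 0 + ((U r m : ℤ))^(k+1) * (U r m : ℤ) [ZMOD ((U r (m+1) : ℤ))^2] :=
          Int.ModEq.add ((Int.modEq_zero_iff_dvd).mpr d1) (ih.mul_right _)
      _ = ((U r m : ℤ))^(k+2) := by ring

lemma binom (a b : ℤ) : ∀ x : ℕ, (a+b)^(x+1) ≡ b^(x+1) + (x+1)*b^x*a [ZMOD a^2] := by
  intro x
  induction x with
  | zero => simp [Int.ModEq]; ring_nf
  | succ x ih =>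
    have h1 : (a+b)^(x+2) = (a+b)^(x+1) * (a+b) := by ring
    rw [h1]
    calc (a+b)^(x+1)*(a+b) ≡ (b^(x+1) + (x+1)*b^x*a)*(a+b) [ZMOD a^2] := ih.mul_right _
      _ ≡ b^(x+2) + ((x:ℤ)+2)*b^(x+1)*a [ZMOD a^2] :=
          (Int.modEq_iff_dvd.mpr ⟨-(((x:ℤ)+1)*b^x), by ring⟩)
      _ = b^(x+1+1) + ((x:ℤ)+1+1)*b^(x+1)*a := by ring

theorem stmt_14 (r : ℕ) (hr : 1 ≤ r) (n x : ℕ) (hn : 2 ≤ n) (hx : 1 ≤ x)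
    (h : U r n ^ x + U r (n + 1) ^ x = U r (n * x - 1)) :
    U r n ∣ x * r := by
  obtain ⟨m, rfl⟩ : ∃ m, n = m + 1 := ⟨n - 1, by omega⟩
  have hm : 1 ≤ m := by omega
  -- x ≥ 2
  have hx2 : 2 ≤ x := by
    by_contra hlt
    have hx1 : x = 1 := by omega
    subst hx1
    simp only [pow_one, Nat.mul_one] at h
    have h1 : 1 ≤ U r (m+1) := one_le_U r hr m
    have h2 : U r (m+2) = r * U r (m+1) + U r m := rfl
    have : U r (m+1) + U r (m+2) = U r m := by simpa using h
    nlinarith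
  obtain ⟨y, rfl⟩ : ∃ y, x = y + 1 := ⟨x - 1, by omega⟩
  have key : ((U r (m+1) : ℤ))^2 ∣ ((y:ℤ)+1) * (U r m : ℤ)^y * ((r : ℤ) * (U r (m+1) : ℤ)) := by
    have hU1 : U r ((m+1) + 1) = r * U r (m+1) + U r m := rfl
    have hmod := U_mod r m y
    have hb := binom ((r:ℤ) * (U r (m+1) : ℤ)) ((U r m : ℤ)) y
    have hb' : ((U r (m+1+1) : ℤ))^(y+1) ≡ (U r m : ℤ)^(y+1) + ((y:ℤ)+1)*(U r m : ℤ)^y*((r:ℤ)*(U r (m+1):ℤ)) [ZMOD ((U r (m+1):ℤ))^2] := by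
      have hd : ((U r (m+1):ℤ))^2 ∣ (((r:ℤ)*(U r (m+1):ℤ)))^2 := ⟨(r:ℤ)^2, by ring⟩
      have h2 := Int.ModEq.of_dvd hd hb
      rw [hU1]
      exact_mod_cast h2
    have h0 : ((U r (m+1) : ℤ))^(y+1) ≡ 0 [ZMOD ((U r (m+1):ℤ))^2] :=
      (Int.modEq_zero_iff_dvd).mpr (pow_dvd_pow _ (by omega))
    have hcast : ((U r (m+1) : ℤ))^(y+1) + ((U r (m+1+1) : ℤ))^(y+1) = (U r ((m+1)*(y+1) - 1) : ℤ) := by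
      exact_mod_cast h
    have hall : (0 : ℤ) + ((U r m : ℤ)^(y+1) + ((y:ℤ)+1)*(U r m : ℤ)^y*((r:ℤ)*(U r (m+1):ℤ))) ≡ (U r m : ℤ)^(y+1) [ZMOD ((U r (m+1):ℤ))^2] := by
      calc (0 : ℤ) + ((U r m : ℤ)^(y+1) + ((y:ℤ)+1)*(U r m : ℤ)^y*((r:ℤ)*(U r (m+1):ℤ)))
          ≡ ((U r (m+1) : ℤ))^(y+1) + ((U r (m+1+1) : ℤ))^(y+1) [ZMOD ((U r (m+1):ℤ))^2] :=
            Int.ModEq.add h0.symm hb'.symm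
        _ = (U r ((m+1)*(y+1) - 1) : ℤ) := hcast
        _ ≡ (U r m : ℤ)^(y+1) [ZMOD ((U r (m+1):ℤ))^2] := U_mod r m y
    obtain ⟨c, hc⟩ := hall.symm.dvd
    exact ⟨c, by linear_combination hc⟩
  -- deduce U_{m+1} ∣ (y+1) * r * U_m^y  in ℤ, then ℕ
  have key2 : (U r (m+1) : ℤ) ∣ ((y:ℤ)+1) * (r:ℤ) * (U r m : ℤ)^y := by
    have hpos : (0:ℤ) < (U r (m+1) : ℤ) := by exact_mod_cast one_le_U r hr m
    refine (mul_dvd_mul_iff_right hpos.ne').mp ?_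
    obtain ⟨c, hc⟩ := key
    exact ⟨c, by linear_combination hc⟩
  have keyN : U r (m+1) ∣ (y+1) * r * (U r m)^y := by
    exact_mod_cast key2
  have cop : Nat.Coprime (U r (m+1)) ((U r m)^y) := ((U_cop r m).symm).pow_right y
  exact (Nat.Coprime.dvd_of_dvd_mul_right cop keyN)
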